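/- Let X, Z ∈ ℝ^{d×r} satisfy ‖XXᵀ − ZZᵀ‖_F ≤ ρ·λ_min(ZᵀZ), ρ < 1/2, and suppose XᵀX is invertible. Then ‖ZZᵀX(XᵀX)^{−2}Xᵀ‖ ≤ 1/(1−ρ), where ‖·‖ denotes the spectral norm. -/

import Mathlib

open Matrix BigOperators

noncomputable section

/-- Frobenius norm of a real matrix. -/
def frob {m n : ℕ} (A : Matrix (Fin m) (Fin n) ℝ) : ℝ :=
  Real.sqrt (∑ i, ∑ j, (A i j) ^ 2)

/-- Trace inner product `⟨A,B⟩ = tr(AᵀB)`. -/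
def mip {m n : ℕ} (A B : Matrix (Fin m) (Fin n) ℝ) : ℝ := (Aᵀ * B).trace

open Classical in
/-- Smallest eigenvalue of a Hermitian matrix (junk value 0 otherwise). -/
def lammin {n : ℕ} (M : Matrix (Fin n) (Fin n) ℝ) : ℝ :=
  if h : M.IsHermitian then ⨅ i, h.eigenvalues i else 0

/-- The positive semidefinite square root (the former Mathlib `Matrix.PosSemidef.sqrt`). -/
def Matrix.PosSemidef.sqrt {n : Type*} [Fintype n] [DecidableEq n] {A : Matrix n n ℝ}
    (hA : A.PosSemidef) : Matrix n n ℝ :=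
  (hA.1.eigenvectorUnitary : Matrix n n ℝ) * diagonal ((√·) ∘ hA.1.eigenvalues) *
    (star hA.1.eigenvectorUnitary : Matrix n n ℝ)

/-- Local norm `‖V‖_X = ‖V (XᵀX)^{1/2}‖_F`. -/
def locNorm {d r : ℕ} (X V : Matrix (Fin d) (Fin r) ℝ) : ℝ :=
  frob (V * (Matrix.posSemidef_conjTranspose_mul_self X).sqrt)

/-- Dual local norm `‖V‖_X* = ‖V (XᵀX)^{-1/2}‖_F`. -/
def dualNorm {d r : ℕ} (X V : Matrix (Fin d) (Fin r) ℝ) : ℝ :=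
  frob (V * ((Matrix.posSemidef_conjTranspose_mul_self X).sqrt)⁻¹)

/-- Leverage score / coherence `g_k(X) = e_kᵀ X (XᵀX)⁻¹ Xᵀ e_k`. -/
def lev {d r : ℕ} (k : Fin d) (X : Matrix (Fin d) (Fin r) ℝ) : ℝ :=
  (X * (Xᴴ * X)⁻¹ * Xᴴ) k k

/-- Gradient of the leverage score `∇g_k(X)`. -/
def levGrad {d r : ℕ} (k : Fin d) (X : Matrix (Fin d) (Fin r) ℝ) :
    Matrix (Fin d) (Fin r) ℝ :=
  (2 : ℝ) • ((1 - X * (Xᴴ * X)⁻¹ * Xᴴ) * Matrix.single k k (1 : ℝ) * X * (Xᴴ * X)⁻¹)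

/-- Stochastic gradient sample `SG(X)` for the index pair `(i,j)`. -/
def SG {d r : ℕ} (X Z : Matrix (Fin d) (Fin r) ℝ) (i j : Fin d) :
    Matrix (Fin d) (Fin r) ℝ :=
  (2 * (d : ℝ) ^ 2 * ((X * Xᴴ - Z * Zᴴ) i j)) •
    ((Matrix.single i j (1 : ℝ) + Matrix.single j i (1 : ℝ)) * X)

namespace SpecAux

open scoped Matrix.Norms.L2Operator

lemma conjT_eq_transpose {m n : ℕ} (A : Matrix (Fin m) (Fin n) ℝ) : Aᴴ = Aᵀ := by
  ext i j; simp [Matrix.conjTranspose_apply]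

lemma dot_self_nonneg {n : ℕ} (x : Fin n → ℝ) : 0 ≤ x ⬝ᵥ x :=
  Finset.sum_nonneg fun i _ => mul_self_nonneg _

lemma dot_self_eq_zero {n : ℕ} {x : Fin n → ℝ} (h : x ⬝ᵥ x = 0) : x = 0 := by
  funext i
  have := (Finset.sum_eq_zero_iff_of_nonneg
    (fun i _ => mul_self_nonneg (x i))).mp h i (Finset.mem_univ i)
  exact mul_self_eq_zero.mp this

lemma dot_move {m n : ℕ} (A : Matrix (Fin m) (Fin n) ℝ) (y : Fin m → ℝ) (x : Fin n → ℝ) :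
    y ⬝ᵥ (A *ᵥ x) = (Aᴴ *ᵥ y) ⬝ᵥ x := by
  rw [Matrix.dotProduct_mulVec, conjT_eq_transpose, Matrix.mulVec_transpose]

lemma abs_dot_le {n : ℕ} (x y : Fin n → ℝ) :
    |x ⬝ᵥ y| ≤ Real.sqrt (x ⬝ᵥ x) * Real.sqrt (y ⬝ᵥ y) := by
  have h := Finset.sum_mul_sq_le_sq_mul_sq Finset.univ x y
  have h2 : (x ⬝ᵥ y) ^ 2 ≤ (x ⬝ᵥ x) * (y ⬝ᵥ y) := by
    simpa [dotProduct, sq] using h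
  calc |x ⬝ᵥ y| = Real.sqrt ((x ⬝ᵥ y) ^ 2) := (Real.sqrt_sq_eq_abs _).symm
    _ ≤ Real.sqrt ((x ⬝ᵥ x) * (y ⬝ᵥ y)) := Real.sqrt_le_sqrt h2
    _ = _ := Real.sqrt_mul (dot_self_nonneg x) _

lemma euc_norm {n : ℕ} (x : EuclideanSpace ℝ (Fin n)) :
    ‖x‖ = Real.sqrt ((WithLp.equiv 2 (Fin n → ℝ) x) ⬝ᵥ (WithLp.equiv 2 (Fin n → ℝ) x)) := by
  rw [EuclideanSpace.norm_eq]
  congr 1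
  simp [dotProduct, Real.norm_eq_abs, sq_abs, sq]

lemma sqrt_dot_mulVec_le {m n : ℕ} (A : Matrix (Fin m) (Fin n) ℝ) (x : Fin n → ℝ) :
    Real.sqrt ((A *ᵥ x) ⬝ᵥ (A *ᵥ x)) ≤ ‖A‖ * Real.sqrt (x ⬝ᵥ x) := by
  have h := Matrix.l2_opNorm_mulVec A ((WithLp.equiv 2 (Fin n → ℝ)).symm x)
  rw [euc_norm, euc_norm] at h
  simpa using h

lemma opNorm_le_of {m n : ℕ} (A : Matrix (Fin m) (Fin n) ℝ) {c : ℝ} (hc : 0 ≤ c)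
    (h : ∀ x : Fin n → ℝ, Real.sqrt ((A *ᵥ x) ⬝ᵥ (A *ᵥ x)) ≤ c * Real.sqrt (x ⬝ᵥ x)) :
    ‖A‖ ≤ c := by
  rw [Matrix.l2_opNorm_def]
  refine ContinuousLinearMap.opNorm_le_bound _ hc fun x => ?_
  show ‖Matrix.toEuclideanLin A x‖ ≤ c * ‖x‖
  rw [Matrix.toEuclideanLin_apply, euc_norm, euc_norm]
  simpa using h (WithLp.equiv 2 (Fin n → ℝ) x)

lemma frob_nonneg {m n : ℕ} (A : Matrix (Fin m) (Fin n) ℝ) : 0 ≤ frob A :=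
  Real.sqrt_nonneg _

lemma eq_zero_of_frob_eq_zero {m n : ℕ} {A : Matrix (Fin m) (Fin n) ℝ}
    (h : frob A = 0) : A = 0 := by
  have h0 : 0 ≤ ∑ i, ∑ j, (A i j) ^ 2 :=
    Finset.sum_nonneg fun i _ => Finset.sum_nonneg fun j _ => sq_nonneg _
  have hs : ∑ i, ∑ j, (A i j) ^ 2 = 0 := (Real.sqrt_eq_zero h0).mp h
  ext i j
  have hi := (Finset.sum_eq_zero_iff_of_nonneg
    (fun i _ => Finset.sum_nonneg fun j _ => sq_nonneg (A i j))).mp hs i (Finset.mem_univ i)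
  have hj := (Finset.sum_eq_zero_iff_of_nonneg
    (fun j _ => sq_nonneg (A i j))).mp hi j (Finset.mem_univ j)
  simpa using pow_eq_zero_iff (n := 2) (by norm_num) |>.mp hj

lemma opNorm_le_frob {m n : ℕ} (A : Matrix (Fin m) (Fin n) ℝ) : ‖A‖ ≤ frob A := by
  refine opNorm_le_of A (frob_nonneg A) fun x => ?_
  rw [frob, ← Real.sqrt_mul (x := ∑ i, ∑ j, (A i j) ^ 2) (Finset.sum_nonneg fun i _ => Finset.sum_nonneg fun j _ => sq_nonneg _)]
  refine Real.sqrt_le_sqrt ?_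
  have key : ∀ i, ((A *ᵥ x) i) * ((A *ᵥ x) i) ≤ (∑ j, (A i j) ^ 2) * (∑ j, (x j) ^ 2) := by
    intro i
    have := Finset.sum_mul_sq_le_sq_mul_sq Finset.univ (fun j => A i j) x
    simpa [Matrix.mulVec, dotProduct, sq] using this
  calc (A *ᵥ x) ⬝ᵥ (A *ᵥ x) = ∑ i, ((A *ᵥ x) i) * ((A *ᵥ x) i) := rfl
    _ ≤ ∑ i, (∑ j, (A i j) ^ 2) * (∑ j, (x j) ^ 2) := Finset.sum_le_sum fun i _ => key i
    _ = (∑ i, ∑ j, (A i j) ^ 2) * (x ⬝ᵥ x) := by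
        rw [← Finset.sum_mul]
        congr 1
        simp [dotProduct, sq]

variable {n : ℕ} {M : Matrix (Fin n) (Fin n) ℝ}

lemma spectral_real (hM : M.IsHermitian) :
    M = (hM.eigenvectorUnitary : Matrix (Fin n) (Fin n) ℝ) * diagonal hM.eigenvalues *
      star (hM.eigenvectorUnitary : Matrix (Fin n) (Fin n) ℝ) := by
  have := hM.spectral_theorem
  simpa using this

lemma posSemidef_sub_smul (hM : M.IsHermitian) (c : ℝ) (hc : ∀ i, c ≤ hM.eigenvalues i) :
    (M - c • 1).PosSemidef := by
  set U : Matrix (Fin n) (Fin n) ℝ := (hM.eigenvectorUnitary : Matrix (Fin n) (Fin n) ℝ) with hUdef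
  set D : Matrix (Fin n) (Fin n) ℝ := diagonal hM.eigenvalues with hDdef
  have hU : U * star U = 1 := (Matrix.mem_unitaryGroup_iff).mp hM.eigenvectorUnitary.2
  have hone : U * (c • (1 : Matrix (Fin n) (Fin n) ℝ)) * star U = c • 1 := by
    rw [Matrix.mul_smul, Matrix.smul_mul, Matrix.mul_one, hU]
  have hdiag : D - c • (1 : Matrix (Fin n) (Fin n) ℝ)
      = diagonal (fun i => hM.eigenvalues i - c) := by
    ext i j
    rcases eq_or_ne i j with rfl | hij
    · simp [hDdef, Matrix.diagonal_apply, Matrix.one_apply]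
    · simp [hDdef, Matrix.diagonal_apply, Matrix.one_apply, hij]
  have key : M - c • 1 = U * diagonal (fun i => hM.eigenvalues i - c) * star U := by
    rw [← hdiag, Matrix.mul_sub, Matrix.sub_mul, hone, ← spectral_real hM]
  rw [key, Matrix.star_eq_conjTranspose U]
  exact (Matrix.posSemidef_diagonal_iff.mpr
    fun i => sub_nonneg.mpr (hc i)).mul_mul_conjTranspose_same U

lemma posSemidef_sq_sub_smul (hM : M.IsHermitian) (c : ℝ) (hc0 : 0 ≤ c)
    (hc : ∀ i, c ≤ hM.eigenvalues i) : (M * M - c • M).PosSemidef := by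
  set U : Matrix (Fin n) (Fin n) ℝ := (hM.eigenvectorUnitary : Matrix (Fin n) (Fin n) ℝ) with hUdef
  set D : Matrix (Fin n) (Fin n) ℝ := diagonal hM.eigenvalues with hDdef
  have hU' : star U * U = 1 := (Matrix.mem_unitaryGroup_iff').mp hM.eigenvectorUnitary.2
  have hspec : M = U * D * star U := spectral_real hM
  have hMM : M * M = U * (D * D) * star U := by
    conv_lhs => rw [hspec]
    simp only [Matrix.mul_assoc]
    rw [← Matrix.mul_assoc (star U) U (D * star U), hU', Matrix.one_mul]
  have hsm : U * (c • D) * star U = c • M := by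
    rw [Matrix.mul_smul, Matrix.smul_mul, hspec]
  have hdiag : D * D - c • D = diagonal
      (fun i => hM.eigenvalues i * hM.eigenvalues i - c * hM.eigenvalues i) := by
    rw [hDdef, Matrix.diagonal_mul_diagonal, ← Matrix.diagonal_smul, ← Matrix.diagonal_sub]
    rfl
  have key : M * M - c • M = U * diagonal
      (fun i => hM.eigenvalues i * hM.eigenvalues i - c * hM.eigenvalues i) * star U := by
    rw [← hdiag, Matrix.mul_sub, Matrix.sub_mul, hsm, ← hMM]
  rw [key, Matrix.star_eq_conjTranspose U]
  refine (Matrix.posSemidef_diagonal_iff.mpr fun i => ?_).mul_mul_conjTranspose_same U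
  have := hc i
  nlinarith

lemma quad_nonneg {M : Matrix (Fin n) (Fin n) ℝ} (h : M.PosSemidef) (x : Fin n → ℝ) :
    0 ≤ x ⬝ᵥ (M *ᵥ x) := by
  simpa using h.dotProduct_mulVec_nonneg x

lemma quad_ge (hM : M.IsHermitian) {c : ℝ} (hc : ∀ i, c ≤ hM.eigenvalues i) (x : Fin n → ℝ) :
    c * (x ⬝ᵥ x) ≤ x ⬝ᵥ (M *ᵥ x) := by
  have h := quad_nonneg (posSemidef_sub_smul hM c hc) x
  rw [Matrix.sub_mulVec, dotProduct_sub, Matrix.smul_mulVec, Matrix.one_mulVec,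
    dotProduct_smul] at h
  simp only [smul_eq_mul] at h
  linarith [h]

lemma quad_sq_ge (hM : M.IsHermitian) {c : ℝ} (hc0 : 0 ≤ c)
    (hc : ∀ i, c ≤ hM.eigenvalues i) (x : Fin n → ℝ) :
    c * (x ⬝ᵥ (M *ᵥ x)) ≤ (M *ᵥ x) ⬝ᵥ (M *ᵥ x) := by
  have h := quad_nonneg (posSemidef_sq_sub_smul hM c hc0 hc) x
  rw [Matrix.sub_mulVec, dotProduct_sub, Matrix.smul_mulVec,
    dotProduct_smul, ← Matrix.mulVec_mulVec] at h
  have h2 : (M *ᵥ x) ⬝ᵥ (M *ᵥ x) = x ⬝ᵥ (M *ᵥ (M *ᵥ x)) := by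
    rw [dot_move M x (M *ᵥ x), hM]
  rw [← h2] at h
  simp only [smul_eq_mul] at h
  linarith [h]

end SpecAux

open SpecAux

set_option maxHeartbeats 1000000 in
open scoped Matrix.Norms.L2Operator in
/-- Spectral-norm bound `‖ZZᵀX(XᵀX)⁻²Xᵀ‖ ≤ 1/(1-ρ)`. -/
theorem spectral_norm_bound {d r : ℕ} (X Z : Matrix (Fin d) (Fin r) ℝ) (ρ : ℝ)
    (hρ : ρ < 1 / 2) (hX : IsUnit (Xᴴ * X).det)
    (h : frob (X * Xᴴ - Z * Zᴴ) ≤ ρ * lammin (Zᴴ * Z)) :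
    ‖Z * Zᴴ * X * ((Xᴴ * X)⁻¹ * (Xᴴ * X)⁻¹) * Xᴴ‖ ≤ 1 / (1 - ρ) := by
  have hρ1 : (0:ℝ) < 1 - ρ := by linarith
  rcases Nat.eq_zero_or_pos r with hr | hr
  · subst hr
    have hZ0 : Z * Zᴴ = 0 := by
      ext i j; simp [Matrix.mul_apply]
    rw [hZ0]
    simp only [Matrix.zero_mul]
    rw [norm_zero]
    positivity
  haveI : Nonempty (Fin r) := ⟨⟨0, hr⟩⟩
  have hZH : (Zᴴ * Z).IsHermitian := (Matrix.posSemidef_conjTranspose_mul_self Z).1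
  have hXH : (Xᴴ * X).IsHermitian := (Matrix.posSemidef_conjTranspose_mul_self X).1
  set μ : ℝ := ⨅ i, hZH.eigenvalues i with hμdef
  have hlammin : lammin (Zᴴ * Z) = μ := by
    rw [lammin, dif_pos hZH]
  rw [hlammin] at h
  have hZev_nonneg : ∀ i, 0 ≤ hZH.eigenvalues i := fun i =>
    (Matrix.posSemidef_conjTranspose_mul_self Z).eigenvalues_nonneg i
  have hμ_le : ∀ i, μ ≤ hZH.eigenvalues i := fun i =>
    ciInf_le (Finite.bddBelow_range _) i
  have hμ_nonneg : 0 ≤ μ := le_ciInf hZev_nonneg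
  -- smallest eigenvalue of XᴴX
  obtain ⟨i₀, hi₀⟩ : ∃ i₀, ∀ j, hXH.eigenvalues i₀ ≤ hXH.eigenvalues j :=
    Finite.exists_min _
  set lam : ℝ := hXH.eigenvalues i₀ with hlamdef
  have hXev_nonneg : ∀ i, 0 ≤ hXH.eigenvalues i := fun i =>
    (Matrix.posSemidef_conjTranspose_mul_self X).eigenvalues_nonneg i
  have hdetX : (Xᴴ * X).det = ∏ i, hXH.eigenvalues i := by
    simpa using hXH.det_eq_prod_eigenvalues
  have hXev_pos : ∀ i, 0 < hXH.eigenvalues i := by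
    intro i
    rcases (hXev_nonneg i).lt_or_eq with h' | h'
    · exact h'
    · exfalso
      apply hX.ne_zero
      rw [hdetX]
      exact Finset.prod_eq_zero (Finset.mem_univ i) h'.symm
  have hlam_pos : 0 < lam := hXev_pos i₀
  -- μ > 0
  have hμ_pos : 0 < μ := by
    rcases hμ_nonneg.lt_or_eq with h' | h'
    · exact h'
    exfalso
    have hE0 : X * Xᴴ - Z * Zᴴ = 0 := by
      apply eq_zero_of_frob_eq_zero
      have h1 : frob (X * Xᴴ - Z * Zᴴ) ≤ 0 := by rw [← h'] at h; simpa using h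
      exact le_antisymm h1 (frob_nonneg _)
    have hXXZZ : X * Xᴴ = Z * Zᴴ := sub_eq_zero.mp hE0
    obtain ⟨j₀, hj₀⟩ : ∃ j₀, ∀ i, hZH.eigenvalues j₀ ≤ hZH.eigenvalues i :=
      Finite.exists_min _
    have hj0 : hZH.eigenvalues j₀ = 0 := by
      have h1 : hZH.eigenvalues j₀ ≤ μ := le_ciInf hj₀
      have h2 := hZev_nonneg j₀
      rw [← h'] at h1
      linarith
    set w : Fin r → ℝ := ⇑(hZH.eigenvectorBasis j₀) with hwdef
    have hw : (Zᴴ * Z) *ᵥ w = 0 := by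
      rw [hwdef, hZH.mulVec_eigenvectorBasis, hj0, zero_smul]
    have hwne : w ≠ 0 := by
      intro h0
      have := hZH.eigenvectorBasis.orthonormal.ne_zero j₀
      apply this
      apply PiLp.ext
      intro i
      exact congrFun h0 i
    have hZw : Z *ᵥ w = 0 := by
      apply dot_self_eq_zero
      rw [dot_move Z (Z *ᵥ w) w, Matrix.mulVec_mulVec, hw]
      simp
    have hNw : (Xᴴ * Z) *ᵥ w = 0 := by
      rw [← Matrix.mulVec_mulVec, hZw, Matrix.mulVec_zero]
    have hdetN : (Xᴴ * Z).det = 0 :=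
      Matrix.exists_mulVec_eq_zero_iff.mp ⟨w, hwne, hNw⟩
    have hNN : (Xᴴ * Z) * (Xᴴ * Z)ᴴ = (Xᴴ * X) * (Xᴴ * X) := by
      rw [Matrix.conjTranspose_mul, Matrix.conjTranspose_conjTranspose]
      calc Xᴴ * Z * (Zᴴ * X) = Xᴴ * (Z * Zᴴ) * X := by
            simp only [Matrix.mul_assoc]
        _ = Xᴴ * (X * Xᴴ) * X := by rw [hXXZZ]
        _ = (Xᴴ * X) * (Xᴴ * X) := by simp only [Matrix.mul_assoc]
    have hcontr : (Xᴴ * X).det * (Xᴴ * X).det = 0 := by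
      have h1 := congrArg Matrix.det hNN
      rw [Matrix.det_mul, Matrix.det_mul, hdetN, zero_mul] at h1
      exact h1.symm
    exact hX.ne_zero (by nlinarith [hcontr])
  have hρ0 : 0 ≤ ρ := by nlinarith [frob_nonneg (X * Xᴴ - Z * Zᴴ)]
  -- operator norm of E
  set E : Matrix (Fin d) (Fin d) ℝ := X * Xᴴ - Z * Zᴴ with hEdef
  set ε : ℝ := ‖E‖ with hεdef
  have hε0 : 0 ≤ ε := norm_nonneg _
  have hεμ : ε ≤ ρ * μ := le_trans (opNorm_le_frob E) h
  have hE1 : ∀ y : Fin d → ℝ, |y ⬝ᵥ (E *ᵥ y)| ≤ ε * (y ⬝ᵥ y) := by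
    intro y
    calc |y ⬝ᵥ (E *ᵥ y)| ≤ Real.sqrt (y ⬝ᵥ y) * Real.sqrt ((E *ᵥ y) ⬝ᵥ (E *ᵥ y)) :=
          abs_dot_le _ _
      _ ≤ Real.sqrt (y ⬝ᵥ y) * (ε * Real.sqrt (y ⬝ᵥ y)) :=
          mul_le_mul_of_nonneg_left (sqrt_dot_mulVec_le E y) (Real.sqrt_nonneg _)
      _ = ε * (Real.sqrt (y ⬝ᵥ y) * Real.sqrt (y ⬝ᵥ y)) := by ring
      _ = ε * (y ⬝ᵥ y) := by rw [Real.mul_self_sqrt (dot_self_nonneg y)]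
  -- eigenvector of XᴴX for lam
  set vf : Fin r → ℝ := ⇑(hXH.eigenvectorBasis i₀) with hvfdef
  have hv : (Xᴴ * X) *ᵥ vf = lam • vf := hXH.mulVec_eigenvectorBasis i₀
  have hv1 : vf ⬝ᵥ vf = 1 := by
    have he := hXH.eigenvalues_eq i₀
    have he2 : lam = vf ⬝ᵥ ((Xᴴ * X) *ᵥ vf) := by
      simpa [hvfdef, star_trivial, hlamdef] using he
    rw [hv, dotProduct_smul, smul_eq_mul] at he2
    have := hlam_pos.ne'
    field_simp at he2
    nlinarith [he2]
  set u : Fin d → ℝ := X *ᵥ vf with hudef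
  have hu : Xᴴ *ᵥ u = lam • vf := by
    rw [hudef, Matrix.mulVec_mulVec, hv]
  have huu : u ⬝ᵥ u = lam := by
    rw [hudef]
    rw [dot_move X (X *ᵥ vf) vf]
    rw [← hudef, hu, smul_dotProduct, smul_eq_mul, hv1, mul_one]
  -- subspaces
  set K : Submodule ℝ (Fin d → ℝ) := LinearMap.ker (Xᴴ.mulVecLin) with hKdef
  set S : Submodule ℝ (Fin d → ℝ) := LinearMap.range (Z.mulVecLin) with hSdef
  have hrankXH : Xᴴ.rank = r := by
    rw [Matrix.rank_conjTranspose, ← Matrix.rank_conjTranspose_mul_self X,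
      Matrix.rank_of_isUnit _ ((Matrix.isUnit_iff_isUnit_det _).mpr hX), Fintype.card_fin]
  have hKr : r + Module.finrank ℝ K = d := by
    have h1 := LinearMap.finrank_range_add_finrank_ker (Xᴴ.mulVecLin)
    rw [Module.finrank_fintype_fun_eq_card, Fintype.card_fin] at h1
    have h2 : Module.finrank ℝ (LinearMap.range (Xᴴ.mulVecLin)) = r := hrankXH
    rw [h2] at h1
    exact h1
  have hZunit : IsUnit (Zᴴ * Z).det := by
    rw [isUnit_iff_ne_zero]
    have : (Zᴴ * Z).det = ∏ i, hZH.eigenvalues i := by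
      simpa using hZH.det_eq_prod_eigenvalues
    rw [this]
    exact (Finset.prod_pos fun i _ => lt_of_lt_of_le hμ_pos (hμ_le i)).ne'
  have hSr : Module.finrank ℝ S = r := by
    have h1 : Z.rank = r := by
      rw [← Matrix.rank_conjTranspose_mul_self Z,
        Matrix.rank_of_isUnit _ ((Matrix.isUnit_iff_isUnit_det _).mpr hZunit), Fintype.card_fin]
    exact h1
  have hvfne : vf ≠ 0 := by
    intro h0
    rw [h0] at hv1
    simp at hv1
  have hu_notin : u ∉ K := by
    intro hmem
    rw [hKdef, LinearMap.mem_ker, Matrix.mulVecLin_apply] at hmem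
    rw [hu] at hmem
    exact hvfne (by simpa [smul_eq_zero, hlam_pos.ne'] using hmem)
  set U' : Submodule ℝ (Fin d → ℝ) := K ⊔ Submodule.span ℝ {u} with hU'def
  have hKU : K < U' := by
    refine lt_of_le_of_ne le_sup_left ?_
    intro heq
    apply hu_notin
    rw [heq]
    exact Submodule.mem_sup_right (Submodule.mem_span_singleton_self u)
  have hU'rank : Module.finrank ℝ K + 1 ≤ Module.finrank ℝ U' :=
    Submodule.finrank_lt_finrank_of_lt hKU
  have hsup_le : Module.finrank ℝ ↥(U' ⊔ S) ≤ d := by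
    have := Submodule.finrank_le (R := ℝ) (M := Fin d → ℝ) (U' ⊔ S)
    rwa [Module.finrank_fintype_fun_eq_card, Fintype.card_fin] at this
  have hinf_pos : 0 < Module.finrank ℝ (U' ⊓ S : Submodule ℝ (Fin d → ℝ)) := by
    have heq := Submodule.finrank_sup_add_finrank_inf_eq U' S
    omega
  obtain ⟨y, hymem, hyne⟩ : ∃ y ∈ (U' ⊓ S : Submodule ℝ (Fin d → ℝ)), y ≠ 0 := by
    by_contra hcon
    push_neg at hcon
    have : (U' ⊓ S : Submodule ℝ (Fin d → ℝ)) = ⊥ := by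
      rw [Submodule.eq_bot_iff]
      exact hcon
    rw [this, finrank_bot] at hinf_pos
    exact lt_irrefl 0 hinf_pos
  obtain ⟨hyU', hyS⟩ := Submodule.mem_inf.mp hymem
  obtain ⟨q, hqK, z, hz, hqzy⟩ := Submodule.mem_sup.mp hyU'
  obtain ⟨c, hc⟩ := Submodule.mem_span_singleton.mp hz
  obtain ⟨w, hw⟩ := hyS
  rw [Matrix.mulVecLin_apply] at hw
  have hq : Xᴴ *ᵥ q = 0 := by
    rw [hKdef, LinearMap.mem_ker, Matrix.mulVecLin_apply] at hqK
    exact hqK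
  have hy_eq : y = q + c • u := by rw [← hqzy, hc]
  -- quadratic forms at y
  have hXy : Xᴴ *ᵥ y = (c * lam) • vf := by
    rw [hy_eq, Matrix.mulVec_add, hq, Matrix.mulVec_smul, hu, zero_add, smul_smul]
  have hyy_pos : 0 < y ⬝ᵥ y := by
    rcases (dot_self_nonneg y).lt_or_eq with h' | h'
    · exact h'
    · exact absurd (dot_self_eq_zero h'.symm) hyne
  have hqu : q ⬝ᵥ u = 0 := by
    rw [hudef, dot_move X q vf, hq]
    simp
  have hyy : y ⬝ᵥ y = q ⬝ᵥ q + c ^ 2 * lam := by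
    rw [hy_eq]
    rw [add_dotProduct, dotProduct_add, dotProduct_add,
      smul_dotProduct, dotProduct_smul, smul_dotProduct,
      dotProduct_smul]
    have hup : u ⬝ᵥ q = 0 := by rw [dotProduct_comm]; exact hqu
    rw [hqu, hup]
    simp only [smul_eq_mul, smul_smul]
    rw [huu]
    ring
  have hXXy : y ⬝ᵥ ((X * Xᴴ) *ᵥ y) = (c * lam) ^ 2 := by
    rw [← Matrix.mulVec_mulVec, dot_move X y (Xᴴ *ᵥ y), hXy, smul_dotProduct,
      dotProduct_smul]
    simp only [smul_eq_mul]
    rw [hv1]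
    ring
  have hupper : y ⬝ᵥ ((X * Xᴴ) *ᵥ y) ≤ lam * (y ⬝ᵥ y) := by
    rw [hXXy, hyy]
    nlinarith [dot_self_nonneg q, hlam_pos]
  have hZy : Zᴴ *ᵥ y = (Zᴴ * Z) *ᵥ w := by
    rw [← hw, Matrix.mulVec_mulVec]
  have hyyw : y ⬝ᵥ y = w ⬝ᵥ ((Zᴴ * Z) *ᵥ w) := by
    conv_lhs => rw [← hw]
    rw [dot_move Z (Z *ᵥ w) w, Matrix.mulVec_mulVec, dotProduct_comm]
  have hlower : μ * (y ⬝ᵥ y) ≤ y ⬝ᵥ ((Z * Zᴴ) *ᵥ y) := by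
    have h1 : y ⬝ᵥ ((Z * Zᴴ) *ᵥ y) = ((Zᴴ * Z) *ᵥ w) ⬝ᵥ ((Zᴴ * Z) *ᵥ w) := by
      rw [← Matrix.mulVec_mulVec, dot_move Z y (Zᴴ *ᵥ y), hZy]
    rw [h1, hyyw]
    exact quad_sq_ge hZH hμ_nonneg hμ_le w
  have hEy : y ⬝ᵥ (E *ᵥ y) = y ⬝ᵥ ((X * Xᴴ) *ᵥ y) - y ⬝ᵥ ((Z * Zᴴ) *ᵥ y) := by
    rw [hEdef, Matrix.sub_mulVec, dotProduct_sub]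
  have hkey : μ - ε ≤ lam := by
    have h1 := hE1 y
    have h2 := abs_le.mp h1
    have h3 : μ * (y ⬝ᵥ y) - ε * (y ⬝ᵥ y) ≤ lam * (y ⬝ᵥ y) := by
      have := h2.1
      rw [hEy] at this
      linarith
    nlinarith [h3, hyy_pos]
  have hlam_ge : (1 - ρ) * μ ≤ lam := by nlinarith
  -- norm bounds
  set B : Matrix (Fin r) (Fin r) ℝ := (Xᴴ * X)⁻¹ with hBdef
  have hXXB : (Xᴴ * X) * B = 1 := Matrix.mul_nonsing_inv _ hX
  have hBXX : B * (Xᴴ * X) = 1 := Matrix.nonsing_inv_mul _ hX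
  have hBH : Bᴴ = B := by
    rw [hBdef, Matrix.conjTranspose_nonsing_inv, hXH]
  have hBnorm : ‖B‖ ≤ lam⁻¹ := by
    refine opNorm_le_of B (inv_nonneg.mpr hlam_pos.le) fun x => ?_
    set yv : Fin r → ℝ := B *ᵥ x with hyvdef
    have hXXyv : (Xᴴ * X) *ᵥ yv = x := by
      rw [hyvdef, Matrix.mulVec_mulVec, hXXB, Matrix.one_mulVec]
    have h1 : lam * (yv ⬝ᵥ yv) ≤ yv ⬝ᵥ x := by
      have := quad_ge hXH hi₀ yv
      rwa [hXXyv] at this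
    have h2 : yv ⬝ᵥ x ≤ Real.sqrt (yv ⬝ᵥ yv) * Real.sqrt (x ⬝ᵥ x) :=
      le_trans (le_abs_self _) (abs_dot_le yv x)
    set s := Real.sqrt (yv ⬝ᵥ yv) with hs
    set t := Real.sqrt (x ⬝ᵥ x) with ht
    have hss : yv ⬝ᵥ yv = s * s := (Real.mul_self_sqrt (dot_self_nonneg yv)).symm
    have hs0 : 0 ≤ s := Real.sqrt_nonneg _
    have ht0 : 0 ≤ t := Real.sqrt_nonneg _
    rcases hs0.lt_or_eq with hspos | hs0'
    · have h3 : lam * s ≤ t := by nlinarith [h1, h2, hss]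
      rw [inv_mul_eq_div, le_div_iff₀ hlam_pos]
      linarith [h3]
    · rw [← hs0']
      positivity
  set P : Matrix (Fin d) (Fin d) ℝ := X * B * Xᴴ with hPdef
  have hPH : Pᴴ = P := by
    rw [hPdef, Matrix.conjTranspose_mul, Matrix.conjTranspose_mul,
      Matrix.conjTranspose_conjTranspose, hBH, Matrix.mul_assoc]
  have hPP : P * P = P := by
    rw [hPdef]
    simp only [Matrix.mul_assoc]
    rw [← Matrix.mul_assoc Xᴴ X (B * Xᴴ), ← Matrix.mul_assoc B (Xᴴ * X) (B * Xᴴ), hBXX,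
      Matrix.one_mul]
  have hPnorm : ‖P‖ ≤ 1 := by
    have h1 : ‖P‖ * ‖P‖ = ‖P‖ := by
      rw [← Matrix.l2_opNorm_conjTranspose_mul_self P, hPH, hPP]
    nlinarith [norm_nonneg P, h1]
  set M2 : Matrix (Fin d) (Fin d) ℝ := X * (B * B) * Xᴴ with hM2def
  have hM2norm : ‖M2‖ = ‖B‖ := by
    have hXBH : (X * B)ᴴ = B * Xᴴ := by
      rw [Matrix.conjTranspose_mul, hBH]
    have h1 : M2 = ((X * B)ᴴ)ᴴ * (X * B)ᴴ := by
      rw [Matrix.conjTranspose_conjTranspose, hXBH, hM2def]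
      simp only [Matrix.mul_assoc]
    have h2 : ‖M2‖ = ‖(X * B)‖ * ‖(X * B)‖ := by
      rw [h1, Matrix.l2_opNorm_conjTranspose_mul_self, Matrix.l2_opNorm_conjTranspose]
    have h3 : (X * B)ᴴ * (X * B) = B := by
      rw [hXBH]
      simp only [Matrix.mul_assoc]
      rw [← Matrix.mul_assoc Xᴴ X B, ← Matrix.mul_assoc B (Xᴴ * X) B, hBXX, Matrix.one_mul]
    rw [h2, ← Matrix.l2_opNorm_conjTranspose_mul_self (X * B), h3]
  -- decomposition
  have hdecomp : Z * Zᴴ * X * (B * B) * Xᴴ = P - E * M2 := by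
    have hZZ : Z * Zᴴ = X * Xᴴ - E := by rw [hEdef, sub_sub_cancel]
    rw [hZZ, Matrix.sub_mul, Matrix.sub_mul, Matrix.sub_mul]
    congr 1
    · rw [hPdef]
      simp only [Matrix.mul_assoc]
      congr 1
      rw [← Matrix.mul_assoc Xᴴ X (B * (B * Xᴴ)), ← Matrix.mul_assoc (Xᴴ * X) B (B * Xᴴ), hXXB,
        Matrix.one_mul]
    · rw [hM2def]
      simp only [Matrix.mul_assoc]
  rw [hdecomp]
  have hfin1 : ‖P - E * M2‖ ≤ ‖P‖ + ‖E * M2‖ := norm_sub_le _ _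
  have hfin2 : ‖E * M2‖ ≤ ε * ‖B‖ := by
    calc ‖E * M2‖ ≤ ‖E‖ * ‖M2‖ := Matrix.l2_opNorm_mul E M2
      _ = ε * ‖B‖ := by rw [hM2norm]
  have hBfin : ‖B‖ ≤ ((1 - ρ) * μ)⁻¹ := by
    refine le_trans hBnorm ?_
    have h1 : 0 < (1 - ρ) * μ := mul_pos hρ1 hμ_pos
    exact inv_anti₀ h1 hlam_ge
  have hεB : ε * ‖B‖ ≤ (ρ * μ) * ((1 - ρ) * μ)⁻¹ := by
    apply mul_le_mul hεμ hBfin (norm_nonneg _) (by positivity)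
  have harith : (ρ * μ) * ((1 - ρ) * μ)⁻¹ = ρ / (1 - ρ) := by
    field_simp
  have hfinal : 1 + ρ / (1 - ρ) = 1 / (1 - ρ) := by
    field_simp
    ring
  calc ‖P - E * M2‖ ≤ ‖P‖ + ‖E * M2‖ := hfin1
    _ ≤ 1 + (ρ * μ) * ((1 - ρ) * μ)⁻¹ := add_le_add hPnorm (le_trans hfin2 hεB)
    _ = 1 + ρ / (1 - ρ) := by rw [harith]
    _ = 1 / (1 - ρ) := hfinal
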